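/- For all positive integers $s_1, s_2, s_3$ and every positive integer $n$, $\sum_{j=1}^{n} \frac{H_j^{(s_1)} H_j^{(s_3)}}{j^{s_2}} = -H(s_1,s_2,s_3;n) + H(s_3,s_1+s_2;n) + H(s_1+s_2+s_3;n) + H(s_3;n)\,H(s_1,s_2;n)$. -/

import Mathlib

open Finset

/-- Auxiliary: multiple harmonic sum with exponent list given in *reverse* order
(head is the last exponent `s_k`), via the standard recurrence. -/
def mhsAux : List ℕ → ℕ → ℚ
  | [], _ => 1
  | s :: rest, n => ∑ m ∈ Finset.Icc 1 n, mhsAux rest (m - 1) / (m : ℚ) ^ s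

/-- Multiple harmonic sum `H(s_1,…,s_k; n) = ∑_{1 ≤ j_1 < ⋯ < j_k ≤ n} 1/(j_1^{s_1}⋯j_k^{s_k})`. -/
def mhs (l : List ℕ) (n : ℕ) : ℚ := mhsAux l.reverse n

/-- Generalized harmonic number `H_n^{(s)} = ∑_{m=1}^n 1/m^s`. -/
def hsum (s n : ℕ) : ℚ := ∑ m ∈ Finset.Icc 1 n, 1 / (m : ℚ) ^ s

lemma hsum_succ (s n : ℕ) : hsum s (n + 1) = hsum s n + 1 / ((n : ℚ) + 1) ^ s := by
  rw [hsum, hsum, Finset.sum_Icc_succ_top (by omega : 1 ≤ n + 1)]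
  push_cast; ring

lemma mhsAux_succ (s : ℕ) (rest : List ℕ) (n : ℕ) :
    mhsAux (s :: rest) (n + 1) = mhsAux (s :: rest) n + mhsAux rest n / ((n : ℚ) + 1) ^ s := by
  show (∑ m ∈ Finset.Icc 1 (n+1), mhsAux rest (m - 1) / (m : ℚ) ^ s) = _
  rw [Finset.sum_Icc_succ_top (by omega : 1 ≤ n + 1)]
  simp only [Nat.add_sub_cancel]
  push_cast
  rfl

lemma mhsAux_single (s n : ℕ) : mhsAux [s] n = hsum s n := by
  show (∑ m ∈ Finset.Icc 1 n, mhsAux [] (m - 1) / (m : ℚ) ^ s) = _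
  simp [mhsAux, hsum]

theorem stmt0 (s1 s2 s3 n : ℕ) (hs1 : 0 < s1) (hs2 : 0 < s2) (hs3 : 0 < s3) (hn : 0 < n) :
    ∑ j ∈ Finset.Icc 1 n, hsum s1 j * hsum s3 j / (j : ℚ) ^ s2 =
      -mhs [s1, s2, s3] n + mhs [s3, s1 + s2] n + mhs [s1 + s2 + s3] n
        + hsum s3 n * mhs [s1, s2] n := by
  clear hn
  simp only [mhs, List.reverse_cons, List.reverse_nil, List.nil_append, List.cons_append]
  induction n with
  | zero => simp [mhsAux, hsum]
  | succ n ih =>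
    rw [Finset.sum_Icc_succ_top (by omega : 1 ≤ n + 1), ih]
    simp only [mhsAux_succ, mhsAux_single, hsum_succ, show ∀ m, mhsAux [] m = 1 from fun _ => rfl]
    have hx : ((n : ℚ) + 1) ≠ 0 := by positivity
    push_cast
    rw [pow_add, pow_add, pow_add]
    field_simp
    ring
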